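/- For every real number k ≥ 0 and every 2×2 complex matrix φ, teleportation with the non-maximally entangled resource Φ^k is a Pauli-Z dephasing channel: E_tel^{Φ^k}(φ) = Σ_{σ∈{I,X,Y,Z}} K_σ (φ ⊗ Φ^k) K_σ† = ((k+1)²/(2(k²+1))) · φ + ((k−1)²/(2(k²+1))) · Z φ Z. -/

import Mathlib

set_option maxHeartbeats 4000000


open Matrix Kronecker

noncomputable section

/-- Standard basis ket |0⟩ of a qubit ℂ². -/
def e0 : Fin 2 → ℂ := ![1, 0]

/-- Standard basis ket |1⟩ of a qubit ℂ². -/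
def e1 : Fin 2 → ℂ := ![0, 1]

/-- The standard basis kets, indexed: |j⟩ for j ∈ {0,1}. -/
def eb : Fin 2 → Fin 2 → ℂ := ![e0, e1]

/-- Tensor (Kronecker) product of two one-qubit vectors. -/
def tens (v w : Fin 2 → ℂ) : Fin 2 × Fin 2 → ℂ := fun p => v p.1 * w p.2

/-- The maximally entangled state |Φ⟩ = (1/√2)(|00⟩ + |11⟩). -/
def ketPhi : Fin 2 × Fin 2 → ℂ :=
  ((1 / Real.sqrt 2 : ℝ) : ℂ) • (tens e0 e0 + tens e1 e1)

/-- The non-maximally entangled state |Φ^k⟩ = K(|00⟩ + k|11⟩), K = 1/√(1+k²). -/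
def ketPhiK (k : ℝ) : Fin 2 × Fin 2 → ℂ :=
  ((1 / Real.sqrt (1 + k ^ 2) : ℝ) : ℂ) • (tens e0 e0 + (k : ℂ) • tens e1 e1)

/-- Density operator |v⟩⟨v| of a pure state. -/
def dens {ι : Type*} (v : ι → ℂ) : Matrix ι ι ℂ := vecMulVec v (star v)

/-- Density operator Φ = |Φ⟩⟨Φ|. -/
def PhiD : Matrix (Fin 2 × Fin 2) (Fin 2 × Fin 2) ℂ := dens ketPhi

/-- Density operator Φ^k = |Φ^k⟩⟨Φ^k|. -/
def PhiKD (k : ℝ) : Matrix (Fin 2 × Fin 2) (Fin 2 × Fin 2) ℂ := dens (ketPhiK k)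

/-- The overlap ⟨v| M |v⟩. -/
def ov {ι : Type*} [Fintype ι] (v : ι → ℂ) (M : Matrix ι ι ℂ) : ℂ :=
  star v ⬝ᵥ M.mulVec v

/-- Pauli X. -/
def Xm : Matrix (Fin 2) (Fin 2) ℂ := !![0, 1; 1, 0]

/-- Pauli Y. -/
def Ym : Matrix (Fin 2) (Fin 2) ℂ := !![0, -Complex.I; Complex.I, 0]

/-- Pauli Z. -/
def Zm : Matrix (Fin 2) (Fin 2) ℂ := !![1, 0; 0, -1]

/-- The Paulis I, X, Y, Z indexed by Fin 4. -/
def pauli : Fin 4 → Matrix (Fin 2) (Fin 2) ℂ := ![1, Xm, Ym, Zm]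

/-- The Bell state |Φ^σ⟩ = (σ ⊗ I)|Φ⟩ for σ the i-th Pauli. -/
def bell (i : Fin 4) : Fin 2 × Fin 2 → ℂ :=
  ((pauli i) ⊗ₖ (1 : Matrix (Fin 2) (Fin 2) ℂ)).mulVec ketPhi

/-- The 2×8 matrix ⟨v| ⊗ I₂ acting on ℂ²⊗ℂ²⊗ℂ² (bra on the first two factors). -/
def braI (v : Fin 2 × Fin 2 → ℂ) : Matrix (Fin 2) (Fin 2 × Fin 2 × Fin 2) ℂ :=
  Matrix.of fun i p => star (v (p.1, p.2.1)) * (if i = p.2.2 then 1 else 0)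

/-- Teleportation Kraus operator K_σ = σ · (⟨Φ^σ| ⊗ I₂). -/
def Kmat (σ : Fin 4) : Matrix (Fin 2) (Fin 2 × Fin 2 × Fin 2) ℂ :=
  pauli σ * braI (bell σ)

/-- Teleportation channel with resource state ρ: E_tel^ρ(φ) = Σ_σ K_σ (φ ⊗ ρ) K_σ†. -/
def Etel (ρ : Matrix (Fin 2 × Fin 2) (Fin 2 × Fin 2) ℂ)
    (φ : Matrix (Fin 2) (Fin 2) ℂ) : Matrix (Fin 2) (Fin 2) ℂ :=
  ∑ σ : Fin 4, Kmat σ * (φ ⊗ₖ ρ) * (Kmat σ)ᴴ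

/-- Hadamard gate. -/
def Hm : Matrix (Fin 2) (Fin 2) ℂ := ((1 / Real.sqrt 2 : ℝ) : ℂ) • !![1, 1; 1, -1]

/-- Phase gate S = diag(1, i). -/
def Sm : Matrix (Fin 2) (Fin 2) ℂ := !![1, 0; 0, Complex.I]

lemma bell_apply' (σ : Fin 4) (p : Fin 2 × Fin 2) :
    bell σ p = ((1 / Real.sqrt 2 : ℝ) : ℂ) * pauli σ p.1 p.2 := by
  obtain ⟨p1, p2⟩ := p
  fin_cases σ <;> fin_cases p1 <;> fin_cases p2 <;>
    simp [bell, pauli, ketPhi, tens, e0, e1, Xm, Ym, Zm, Matrix.mulVec, dotProduct,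
      Fintype.sum_prod_type, Fin.sum_univ_succ, Matrix.kroneckerMap_apply,
      Matrix.one_apply] <;> ring

lemma Kmat_apply (σ : Fin 4) (a : Fin 2) (p : Fin 2 × Fin 2 × Fin 2) :
    Kmat σ a p = ((1 / Real.sqrt 2 : ℝ) : ℂ) * star (pauli σ p.1 p.2.1) * pauli σ a p.2.2 := by
  simp [Kmat, Matrix.mul_apply, braI, bell_apply', Fin.sum_univ_succ, mul_comm, mul_assoc,
    mul_left_comm]

/-- Teleportation with Φ^k is a Pauli-Z dephasing channel. -/
theorem teleportation_with_phiK_is_dephasing (k : ℝ) (hk : 0 ≤ k)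
    (φ : Matrix (Fin 2) (Fin 2) ℂ) :
    Etel (PhiKD k) φ
      = (((k + 1) ^ 2 / (2 * (k ^ 2 + 1)) : ℝ) : ℂ) • φ
        + (((k - 1) ^ 2 / (2 * (k ^ 2 + 1)) : ℝ) : ℂ) • (Zm * φ * Zm) := by
  have hs : ((Real.sqrt 2 : ℝ) : ℂ) * ((Real.sqrt 2 : ℝ) : ℂ) = 2 := by
    rw [← Complex.ofReal_mul, Real.mul_self_sqrt (by norm_num)]
    norm_num
  have h1k : (0:ℝ) ≤ 1 + k ^ 2 := by positivity
  have ht : ((Real.sqrt (1 + k ^ 2) : ℝ) : ℂ) * ((Real.sqrt (1 + k ^ 2) : ℝ) : ℂ)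
      = 1 + (k:ℂ) ^ 2 := by
    rw [← Complex.ofReal_mul, Real.mul_self_sqrt h1k]
    push_cast; ring
  have hne : (1 : ℂ) + (k:ℂ)^2 ≠ 0 := by
    intro h
    have : (1:ℝ) + k^2 = 0 := by exact_mod_cast congrArg Complex.re h
    nlinarith
  have hsi : (((Real.sqrt 2 : ℝ) : ℂ))⁻¹ ^ 2 = 2⁻¹ := by
    rw [sq, ← mul_inv, hs]
  have hti : (((Real.sqrt (1 + k ^ 2) : ℝ) : ℂ))⁻¹ ^ 2 = (1 + (k:ℂ) ^ 2)⁻¹ := by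
    rw [sq, ← mul_inv, ht]
  have h2k : (2 : ℂ) + (k:ℂ) ^ 2 * 2 ≠ 0 := by
    intro h
    apply hne
    have : (2:ℂ) * (1 + (k:ℂ)^2) = 0 := by rw [← h]; ring
    simpa using this
  ext a b
  fin_cases a <;> fin_cases b <;>
  · simp only [Etel, Matrix.sum_apply, Matrix.mul_apply, Matrix.conjTranspose_apply,
      Kmat_apply, Fintype.sum_prod_type, Fin.sum_univ_two, Fin.sum_univ_four,
      Matrix.kroneckerMap_apply, PhiKD, dens, Matrix.vecMulVec_apply, ketPhiK, tens,
      e0, e1, pauli, Xm, Ym, Zm, Matrix.add_apply, Matrix.smul_apply, Pi.smul_apply,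
      Pi.add_apply, Pi.star_apply, Matrix.one_apply, Matrix.cons_val_zero,
      Matrix.cons_val_one, Matrix.head_cons, Matrix.cons_val_two, Matrix.cons_val_three,
      Matrix.tail_cons, Matrix.cons_val', Matrix.empty_val',
      Matrix.cons_val_fin_one, smul_eq_mul, star_one, star_zero, _root_.map_mul,
      _root_.map_one, map_zero, Complex.conj_ofReal, _root_.Complex.star_def,
      _root_.Complex.conj_I, Fin.succ, mul_zero, zero_mul, mul_one, one_mul,
      add_zero, zero_add, neg_zero, mul_neg, neg_mul, neg_neg, star_neg,
      if_true, if_false]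
    norm_num
    ring_nf
    rw [hsi, hti]
    field_simp [h2k]
    ring_nf
    rw [Complex.I_pow_four]
    ring
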